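/- Let n = 6m with m ≥ 1, let 3 < c < n with c = n − c' and 3 < c' < 3m, and suppose n can be written as n = k₁ + ... + k_s where each kᵢ satisfies c' + 3 ≤ kᵢ ≤ 2c' + 2 and kᵢ + c' ≢ 3 (mod 6). If moreover for every interval of kᵢ consecutive vertices the induced subgraph of Circ(n; 2,3,c) has a hamiltonian path from the second vertex of the interval to one of the last two vertices, then Circ(n; 2, 3, c) has a hamiltonian cycle. -/

import Mathlib

/-- `IntervalHamPath n c u k` : in the circulant digraph Circ(n; 2, 3, c) on ℤ_n,
the subgraph induced by the interval of k consecutive vertices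
{u, u+1, ..., u+k−1} (mod n) has a hamiltonian path that starts at the second
vertex u + 1 and ends at one of the last two vertices u + k − 2 or u + k − 1. -/
def IntervalHamPath (n c k : ℕ) (u : ℤ) : Prop :=
  ∃ x : Fin k → ZMod n,
    Function.Injective x ∧
    (∀ v : ZMod n, (∃ j : ℕ, j < k ∧ v = ((u + j : ℤ) : ZMod n)) ↔ ∃ i, x i = v) ∧
    (∀ i : Fin k, ∀ h : (i : ℕ) + 1 < k,
      x ⟨(i : ℕ) + 1, h⟩ - x i ∈ ({2, 3, (c : ZMod n)} : Set (ZMod n))) ∧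
    ∀ h : 0 < k,
      x ⟨0, h⟩ = ((u + 1 : ℤ) : ZMod n) ∧
      (x ⟨k - 1, Nat.sub_lt h Nat.one_pos⟩ = ((u + k - 2 : ℤ) : ZMod n) ∨
        x ⟨k - 1, Nat.sub_lt h Nat.one_pos⟩ = ((u + k - 1 : ℤ) : ZMod n))

/-- `HasHamCycle n S` : the circulant digraph Circ(n; S) on ℤ_n has a
hamiltonian cycle. -/
def HasHamCycle (n : ℕ) (S : Set (ZMod n)) : Prop :=
  ∃ x : Fin n → ZMod n, Function.Bijective x ∧
    ∀ i : Fin n, x ⟨((i : ℕ) + 1) % n, Nat.mod_lt _ i.pos⟩ - x i ∈ S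

lemma zmod_int_inj (n : ℕ) {a b : ℤ} (ha : 0 ≤ a) (ha2 : a < n) (hb : 0 ≤ b) (hb2 : b < n)
    (h : ((a : ZMod n) = (b : ZMod n))) : a = b := by
  have h2 := (ZMod.intCast_eq_intCast_iff a b n).mp h
  unfold Int.ModEq at h2
  rwa [Int.emod_eq_of_lt ha ha2, Int.emod_eq_of_lt hb hb2] at h2

lemma aux (n c : ℕ) [NeZero n] :
    ∀ (ks : List ℕ), (∀ k ∈ ks, 2 ≤ k) →
    (∀ u : ℤ, ∀ k ∈ ks, IntervalHamPath n c k u) →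
    ∀ t : ℕ, t + ks.sum ≤ n →
    ∃ x : Fin ks.sum → ZMod n,
      Function.Injective x ∧
      (∀ i : Fin ks.sum, ∃ j : ℕ, j < ks.sum ∧ x i = (((t : ℤ) + j : ℤ) : ZMod n)) ∧
      (∀ i : Fin ks.sum, ∀ h : (i : ℕ) + 1 < ks.sum,
        x ⟨(i : ℕ) + 1, h⟩ - x i ∈ ({2, 3, (c : ZMod n)} : Set (ZMod n))) ∧
      ∀ h : 0 < ks.sum,
        x ⟨0, h⟩ = (((t : ℤ) + 1 : ℤ) : ZMod n) ∧
        (x ⟨ks.sum - 1, Nat.sub_lt h Nat.one_pos⟩ = (((t : ℤ) + ks.sum - 2 : ℤ) : ZMod n) ∨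
         x ⟨ks.sum - 1, Nat.sub_lt h Nat.one_pos⟩ = (((t : ℤ) + ks.sum - 1 : ℤ) : ZMod n)) := by
  intro ks
  induction ks with
  | nil =>
    intro _ _ t _
    refine ⟨Fin.elim0, fun i => i.elim0, fun i => i.elim0, fun i => i.elim0, fun h => ?_⟩
    simp at h
  | cons k ks' IH =>
    intro h2 hp t ht
    have hk2 : 2 ≤ k := h2 k (List.mem_cons_self)
    have hT : (k :: ks').sum = k + ks'.sum := List.sum_cons
    obtain ⟨p, pinj, pim, pstep, pend⟩ := hp (t : ℤ) k (List.mem_cons_self)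
    obtain ⟨q, qinj, qim, qstep, qend⟩ :=
      IH (fun k hk => h2 k (List.mem_cons_of_mem _ hk))
         (fun u k hk => hp u k (List.mem_cons_of_mem _ hk)) (t + k) (by omega)
    have pval : ∀ i : Fin k, ∃ j : ℕ, j < k ∧ p i = (((t : ℤ) + j : ℤ) : ZMod n) := by
      intro i
      obtain ⟨j, hj, hv⟩ := (pim (p i)).mpr ⟨i, rfl⟩
      exact ⟨j, hj, hv⟩
    set x : Fin ((k :: ks').sum) → ZMod n := fun i =>
      if h : (i : ℕ) < k then p ⟨i, h⟩
      else q ⟨(i : ℕ) - k, by have h2 := i.isLt; omega⟩ with hx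
    have hx1 : ∀ (i : Fin ((k :: ks').sum)) (h : (i : ℕ) < k), x i = p ⟨i, h⟩ :=
      fun i h => dif_pos h
    have hx2 : ∀ (i : Fin ((k :: ks').sum)) (h : ¬ (i : ℕ) < k)
        (h' : (i : ℕ) - k < ks'.sum), x i = q ⟨(i : ℕ) - k, h'⟩ :=
      fun i h h' => dif_neg h
    have hx1' : ∀ (a : ℕ) (ha : a < (k :: ks').sum) (h : a < k),
        x ⟨a, ha⟩ = p ⟨a, h⟩ := fun a ha h => dif_pos h
    have hx2' : ∀ (a : ℕ) (ha : a < (k :: ks').sum) (h : ¬ a < k)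
        (h' : a - k < ks'.sum), x ⟨a, ha⟩ = q ⟨a - k, h'⟩ := fun a ha h h' => dif_neg h
    have hk0 : 0 < k := by omega
    refine ⟨x, ?_, ?_, ?_, ?_⟩
    · -- injectivity
      intro i1 i2 he
      have hi1 := i1.isLt; have hi2 := i2.isLt
      by_cases ha : (i1 : ℕ) < k <;> by_cases hb : (i2 : ℕ) < k
      · rw [hx1 i1 ha, hx1 i2 hb] at he
        have h3 := congrArg Fin.val (pinj he)
        simp only [Fin.val_mk] at h3
        exact Fin.ext h3
      · rw [hx1 i1 ha, hx2 i2 hb (by omega)] at he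
        obtain ⟨j1, hj1, e1⟩ := pval ⟨i1, ha⟩
        obtain ⟨j2, hj2, e2⟩ := qim ⟨(i2 : ℕ) - k, by omega⟩
        rw [e1, e2] at he
        have := zmod_int_inj n (by positivity) (by push_cast; omega)
          (by positivity) (by push_cast; omega) he
        exact ((by omega : False)).elim
      · rw [hx2 i1 ha (by omega), hx1 i2 hb] at he
        obtain ⟨j1, hj1, e1⟩ := qim ⟨(i1 : ℕ) - k, by omega⟩
        obtain ⟨j2, hj2, e2⟩ := pval ⟨i2, hb⟩
        rw [e1, e2] at he
        have := zmod_int_inj n (by positivity) (by push_cast; omega)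
          (by positivity) (by push_cast; omega) he
        exact ((by omega : False)).elim
      · rw [hx2 i1 ha (by omega), hx2 i2 hb (by omega)] at he
        have h3 := congrArg Fin.val (qinj he)
        simp only [Fin.val_mk] at h3
        apply Fin.ext; omega
    · -- image
      intro i
      have hi := i.isLt
      by_cases ha : (i : ℕ) < k
      · obtain ⟨j, hj, e⟩ := pval ⟨i, ha⟩
        exact ⟨j, by omega, by rw [hx1 i ha]; exact e⟩
      · obtain ⟨j, hj, e⟩ := qim ⟨(i : ℕ) - k, by omega⟩
        refine ⟨k + j, by omega, ?_⟩
        rw [hx2 i ha (by omega), e]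
        congr 1
        push_cast
        ring
    · -- steps
      intro i h
      have hi := i.isLt
      rcases Nat.lt_trichotomy ((i : ℕ) + 1) k with hA | hA | hA
      · rw [hx1' ((i : ℕ) + 1) h hA, hx1 i (by omega)]
        exact pstep ⟨i, by omega⟩ hA
      · -- connection
        have hT' : 0 < ks'.sum := by omega
        have hik : (i : ℕ) < k := by omega
        rw [hx1 i hik, hx2' ((i : ℕ) + 1) h (by omega) (by omega)]
        have e1 : (⟨(i : ℕ) + 1 - k, by omega⟩ : Fin ks'.sum) = ⟨0, hT'⟩ :=
          Fin.ext (by simp; omega)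
        rw [e1, (qend hT').1]
        have e2 : (⟨(i : ℕ), hik⟩ : Fin k) = ⟨k - 1, Nat.sub_lt hk0 Nat.one_pos⟩ :=
          Fin.ext (by simp; omega)
        rw [e2]
        rcases (pend hk0).2 with e3 | e3
        · rw [e3, ← Int.cast_sub,
            show ((↑(t + k) + 1 : ℤ) - ((t : ℤ) + ↑k - 2)) = 3 by push_cast; ring]
          right; left; push_cast; ring
        · rw [e3, ← Int.cast_sub,
            show ((↑(t + k) + 1 : ℤ) - ((t : ℤ) + ↑k - 1)) = 2 by push_cast; ring]
          left; push_cast; ring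
      · have hik : ¬ (i : ℕ) < k := by omega
        rw [hx2 i hik (by omega), hx2' ((i : ℕ) + 1) h (by omega) (by omega)]
        have e1 : (⟨(i : ℕ) + 1 - k, by omega⟩ : Fin ks'.sum) =
            ⟨((i : ℕ) - k) + 1, by omega⟩ := Fin.ext (by simp; omega)
        rw [e1]
        exact qstep ⟨(i : ℕ) - k, by omega⟩ (by simp only [Fin.val_mk]; omega)
    · -- endpoints
      intro h
      constructor
      · rw [hx1' 0 h hk0]
        exact (pend hk0).1
      · by_cases hT' : ks'.sum = 0
        · rw [hx1' ((k :: ks').sum - 1) (Nat.sub_lt h Nat.one_pos) (by omega)]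
          have e2 : (⟨(k :: ks').sum - 1, by omega⟩ : Fin k) =
              ⟨k - 1, Nat.sub_lt hk0 Nat.one_pos⟩ := Fin.ext (by simp; omega)
          rw [e2]
          rcases (pend hk0).2 with e3 | e3
          · left; rw [e3]; congr 1; omega
          · right; rw [e3]; congr 1; omega
        · have hq : 0 < ks'.sum := by omega
          rw [hx2' ((k :: ks').sum - 1) (Nat.sub_lt h Nat.one_pos) (by omega) (by omega)]
          have e2 : (⟨(k :: ks').sum - 1 - k, by omega⟩ : Fin ks'.sum) =
              ⟨ks'.sum - 1, Nat.sub_lt hq Nat.one_pos⟩ := Fin.ext (by simp; omega)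
          rw [e2]
          rcases (qend hq).2 with e3 | e3
          · left; rw [e3]; congr 1; omega
          · right; rw [e3]; congr 1; omega

/-- If n = 6m, 3 < c' < 3m, c = n − c', and n = k₁ + ⋯ + k_s with each kᵢ in
[c'+3, 2c'+2] and kᵢ + c' ≢ 3 (mod 6), and every interval of kᵢ consecutive
vertices has a hamiltonian path from its second vertex to one of its last two
vertices, then Circ(n; 2, 3, c) has a hamiltonian cycle. -/
theorem stmt_15 (m n c' c : ℕ) (hm : 1 ≤ m) (hn : n = 6 * m)
    (hc'1 : 3 < c') (hc'2 : c' < 3 * m) (hc : c = n - c')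
    (ks : List ℕ) (hsum : ks.sum = n)
    (hks : ∀ k ∈ ks, c' + 3 ≤ k ∧ k ≤ 2 * c' + 2 ∧ (k + c') % 6 ≠ 3)
    (hpaths : ∀ u : ℤ, ∀ k ∈ ks, IntervalHamPath n c k u) :
    HasHamCycle n ({2, 3, (c : ZMod n)} : Set (ZMod n)) := by
  have hn0 : 0 < n := by omega
  haveI : NeZero n := ⟨by omega⟩
  obtain ⟨x, hinj, him, hstep, hend⟩ :=
    aux n c ks (fun k hk => by have := hks k hk; omega) hpaths 0 (by omega)
  have hsum0 : 0 < ks.sum := by omega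
  set y : Fin n → ZMod n := fun i => x ⟨(i : ℕ), by omega⟩ with hy
  refine ⟨y, ?_, ?_⟩
  · rw [Fintype.bijective_iff_injective_and_card]
    constructor
    · intro a b hab
      have h3 := congrArg Fin.val (hinj hab)
      simp only [Fin.val_mk] at h3
      exact Fin.ext h3
    · simp [ZMod.card]
  · intro i
    rcases Nat.lt_or_ge ((i : ℕ) + 1) n with hlt | hge
    · have e1 : y ⟨((i : ℕ) + 1) % n, Nat.mod_lt _ i.pos⟩ = x ⟨(i : ℕ) + 1, by omega⟩ :=
        congrArg x (Fin.ext (by simp [Nat.mod_eq_of_lt hlt]))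
      rw [e1]
      exact hstep ⟨(i : ℕ), by omega⟩ (by simp only [Fin.val_mk]; omega)
    · -- wrap-around
      have hi : (i : ℕ) = n - 1 := by have := i.isLt; omega
      have e1 : y ⟨((i : ℕ) + 1) % n, Nat.mod_lt _ i.pos⟩ = x ⟨0, hsum0⟩ :=
        congrArg x (Fin.ext (by
          simp only [Fin.val_mk]
          have hin : (i : ℕ) + 1 = n := by omega
          rw [hin, Nat.mod_self]))
      have e2 : y i = x ⟨ks.sum - 1, Nat.sub_lt hsum0 Nat.one_pos⟩ :=
        congrArg x (Fin.ext (by simp only [Fin.val_mk]; omega))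
      rw [e1, e2, (hend hsum0).1]
      rcases (hend hsum0).2 with e3 | e3
      · rw [e3, ← Int.cast_sub,
          show (((0 : ℕ) : ℤ) + 1 - (((0 : ℕ) : ℤ) + ↑ks.sum - 2)) = 3 - (n : ℤ) by omega]
        rw [Int.cast_sub, Int.cast_natCast, ZMod.natCast_self, sub_zero]
        right; left; norm_num
      · rw [e3, ← Int.cast_sub,
          show (((0 : ℕ) : ℤ) + 1 - (((0 : ℕ) : ℤ) + ↑ks.sum - 1)) = 2 - (n : ℤ) by omega]
        rw [Int.cast_sub, Int.cast_natCast, ZMod.natCast_self, sub_zero]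
        left; norm_num
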